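/- With Ẽ(x ⊗ y) = ∑_{i,j} φ_j(x)(M_j^i)* y M_j^i where φ_k(x) = Tr((ρ_k ⊗ |k⟩⟨k|)x)/Tr(ρ_k), the two-fold iterate satisfies Ẽ(x₁ ⊗ Ẽ(x₂ ⊗ I)) = ∑_{j,v} ((B_v^j)* B_v^j ⊗ |v⟩⟨v|) φ_v(x₁) φ_j(x₂). -/

import Mathlib

open Matrix Kronecker BigOperators ComplexOrder

/-- The dual transition expectation
`Ẽ(x ⊗ y) = ∑_{i,j} φ_j(x) • (M_j^i)* y M_j^i`, `φ_j(x) = Tr((ρ_j ⊗ |j⟩⟨j|) x)/Tr ρ_j`. -/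
noncomputable def dualTransExp {n Λ : Type*} [Fintype n] [Fintype Λ] [DecidableEq n] [DecidableEq Λ]
    (B : Λ → Λ → Matrix n n ℂ) (ρf : Λ → Matrix n n ℂ)
    (x y : Matrix (n × Λ) (n × Λ) ℂ) : Matrix (n × Λ) (n × Λ) ℂ :=
  ∑ i, ∑ j,
    (((ρf j ⊗ₖ Matrix.single j j (1 : ℂ)) * x).trace / (ρf j).trace) •
      (((B i j) ⊗ₖ Matrix.single i j (1 : ℂ))ᴴ * y *
        ((B i j) ⊗ₖ Matrix.single i j (1 : ℂ)))

section Aux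
variable {n Λ : Type*} [Fintype n] [Fintype Λ] [DecidableEq n] [DecidableEq Λ]
set_option linter.unusedSectionVars false

lemma kron_conjT (A : Matrix n n ℂ) (E : Matrix Λ Λ ℂ) :
    (A ⊗ₖ E)ᴴ = Aᴴ ⊗ₖ Eᴴ := by
  ext ⟨a, b⟩ ⟨c, d⟩
  simp [conjTranspose_apply, kroneckerMap_apply, mul_comm]

lemma stdBM_conjT (i j : Λ) :
    (Matrix.single i j (1 : ℂ))ᴴ = Matrix.single j i 1 := by
  ext a b
  simp [Matrix.single, conjTranspose_apply, apply_ite, and_comm]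

lemma sum_kron {ι : Type*} (s : Finset ι) (A : ι → Matrix n n ℂ) (E : Matrix Λ Λ ℂ) :
    (∑ i ∈ s, A i) ⊗ₖ E = ∑ i ∈ s, A i ⊗ₖ E := by
  ext ⟨a, b⟩ ⟨c, d⟩
  simp [kroneckerMap_apply, Matrix.sum_apply, Finset.sum_mul]

lemma triple_std (i j k : Λ) :
    Matrix.single j i (1 : ℂ) * Matrix.single k k 1 *
      Matrix.single i j 1 = if k = i then Matrix.single j j 1 else 0 := by
  by_cases h : k = i
  · subst h
    simp
  · rw [Matrix.single_mul_single_of_ne (c := (1 : ℂ)) (i := j) (j := i) (k := k) (h := Ne.symm h) (d := 1), zero_mul, if_neg h]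

lemma kron_ite (P : Prop) [Decidable P] (A : Matrix n n ℂ) (X : Matrix Λ Λ ℂ) :
    A ⊗ₖ (if P then X else 0) = if P then A ⊗ₖ X else 0 := by
  split <;> simp

lemma inner_step (B : Λ → Λ → Matrix n n ℂ)
    (hB : ∀ j, ∑ i, (B i j)ᴴ * B i j = 1) (c : Λ → ℂ) :
    (∑ i, ∑ j, c j •
        (((B i j) ⊗ₖ Matrix.single i j (1 : ℂ))ᴴ * 1 *
          ((B i j) ⊗ₖ Matrix.single i j (1 : ℂ))))
      = ∑ j, c j • ((1 : Matrix n n ℂ) ⊗ₖ Matrix.single j j 1) := by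
  simp only [mul_one, kron_conjT, stdBM_conjT, ← Matrix.mul_kronecker_mul,
    Matrix.single_mul_single_same, one_mul]
  rw [Finset.sum_comm]
  refine Finset.sum_congr rfl fun j _ => ?_
  rw [← Finset.smul_sum, ← sum_kron, hB j]

end Aux

/-- The two-fold iterate of the dual transition expectation:
`Ẽ(x₁ ⊗ Ẽ(x₂ ⊗ 1)) = ∑_{j,v} φ_v(x₁) φ_j(x₂) • ((B_v^j)* B_v^j ⊗ |v⟩⟨v|)`. -/
theorem dualTransExp_iterate
    {n Λ : Type*} [Fintype n] [Fintype Λ] [DecidableEq n] [DecidableEq Λ]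
    (B : Λ → Λ → Matrix n n ℂ)
    (hB : ∀ j, ∑ i, (B i j)ᴴ * B i j = 1)
    (ρf : Λ → Matrix n n ℂ)
    (hpos : ∀ j, (ρf j).PosSemidef)
    (htr : ∀ j, 0 < (ρf j).trace)
    (φ : Λ → Matrix (n × Λ) (n × Λ) ℂ → ℂ)
    (hφ : ∀ k x, φ k x = ((ρf k ⊗ₖ Matrix.single k k (1 : ℂ)) * x).trace / (ρf k).trace)
    (x₁ x₂ : Matrix (n × Λ) (n × Λ) ℂ) :
    dualTransExp B ρf x₁ (dualTransExp B ρf x₂ 1)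
      = ∑ j, ∑ v, (φ v x₁ * φ j x₂) •
          (((B j v)ᴴ * B j v) ⊗ₖ Matrix.single v v (1 : ℂ)) := by
  have hinner : dualTransExp B ρf x₂ 1
      = ∑ j, (((ρf j ⊗ₖ Matrix.single j j (1 : ℂ)) * x₂).trace / (ρf j).trace) •
          ((1 : Matrix n n ℂ) ⊗ₖ Matrix.single j j 1) := by
    rw [dualTransExp]
    exact inner_step B hB _
  rw [dualTransExp, hinner]
  simp only [hφ, Matrix.mul_sum, Matrix.sum_mul, Matrix.mul_smul, Matrix.smul_mul,
    kron_conjT, stdBM_conjT, ← Matrix.mul_kronecker_mul, mul_one, one_mul,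
    triple_std, kron_ite, smul_ite, smul_zero, Finset.sum_ite_eq', Finset.mem_univ,
    if_true, smul_smul]
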